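/- Assume n ≥ 1, m ≥ 1, and the Tanner graph of H is connected (the bipartite graph on vertex set {u_1,…,u_n} ∪ {v_1,…,v_m} with an edge between u_i and v_j iff H_{j,i} ≠ 0 is connected). Let (h, z) be an LP pseudocodeword with h ≠ 0, and let M = ∑_{α∈R} h_1(α) (independent of the coordinate index by connectedness); then M > 0. Define f_i^{(α)} = h_i(α)/M for all i ∈ {1,…,n} and α ∈ R⁻, and w_{j,S} = z_{j,S}/M for all j ∈ J and S ∈ E_j. Then (f, w) is a point of the polytope Q. -/
import Mathlib


open Finset

/-- The tuple of sets `X_j(c)`: for each symbol `α`, the set of positions `i` in the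
support of the `j`-th row of `H` where `c i = α`. -/
def Xj {R : Type} [Ring R] [DecidableEq R] {n m : ℕ} (H : Fin m → Fin n → R) (j : Fin m)
    (c : Fin n → R) : R → Finset (Fin n) :=
  fun α => univ.filter (fun i => H j i ≠ 0 ∧ c i = α)

/-- The set `E_j` of all tuples `X_j(c)` arising from words `c` satisfying parity check `j`. -/
def Ej {R : Type} [Ring R] [Fintype R] [DecidableEq R] {n m : ℕ} (H : Fin m → Fin n → R)
    (j : Fin m) : Finset (R → Finset (Fin n)) :=
  (univ.filter (fun c : Fin n → R => ∑ i, H j i * c i = 0)).image (Xj H j)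

/-- Membership in the relaxed LP polytope `Q`. -/
def MemQ {R : Type} [Ring R] [Fintype R] [DecidableEq R] {n m : ℕ} (H : Fin m → Fin n → R)
    (f : Fin n → R → ℝ) (w : Fin m → (R → Finset (Fin n)) → ℝ) : Prop :=
  (∀ j : Fin m, ∀ S ∈ Ej H j, 0 ≤ w j S ∧ w j S ≤ 1) ∧
  (∀ j : Fin m, ∑ S ∈ Ej H j, w j S = 1) ∧
  (∀ j : Fin m, ∀ i : Fin n, H j i ≠ 0 → ∀ α : R, α ≠ 0 →
    f i α = ∑ S ∈ (Ej H j).filter (fun S => i ∈ S α), w j S)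

/-- LP pseudocodeword: nonnegative integer vectors `(h, z)` satisfying the defining equations. -/
def IsLPPseudocodeword {R : Type} [Ring R] [Fintype R] [DecidableEq R] {n m : ℕ}
    (H : Fin m → Fin n → R) (h : Fin n → R → ℤ)
    (z : Fin m → (R → Finset (Fin n)) → ℤ) : Prop :=
  (∀ i α, 0 ≤ h i α) ∧
  (∀ j : Fin m, ∀ S ∈ Ej H j, 0 ≤ z j S) ∧
  (∀ j : Fin m, ∀ i : Fin n, H j i ≠ 0 →
    (∀ α : R, α ≠ 0 → h i α = ∑ S ∈ (Ej H j).filter (fun S => i ∈ S α), z j S) ∧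
    h i 0 = ∑ S ∈ (Ej H j).filter (fun S => ∀ α : R, α ≠ 0 → i ∉ S α), z j S)

/-- The embedding of a word `c ∈ Rⁿ` as the point `(ξ(c₁) | … | ξ(c_n))`
(indicator coordinates for the nonzero symbols). -/
def xiEmb {R : Type} [Zero R] [DecidableEq R] {n : ℕ} (c : Fin n → R) : Fin n → R → ℝ :=
  fun i α => if α ≠ 0 ∧ c i = α then 1 else 0

/-- The linear cost function `λ · fᵀ = ∑_i ∑_{α ∈ R⁻} λ_i^{(α)} f_i^{(α)}`. -/
def costQ {R : Type} [Zero R] [Fintype R] [DecidableEq R] {n : ℕ}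
    (lam f : Fin n → R → ℝ) : ℝ :=
  ∑ i, ∑ α ∈ univ.filter (fun α : R => α ≠ 0), lam i α * f i α

/-- Connectedness of the Tanner graph of `H`: the bipartite graph on
`{u_1,…,u_n} ∪ {v_1,…,v_m}` with `u_i ~ v_j` iff `H j i ≠ 0`. -/
def TannerConnected {R : Type} [Zero R] {n m : ℕ} (H : Fin m → Fin n → R) : Prop :=
  (SimpleGraph.fromRel (fun x y : Fin n ⊕ Fin m =>
      ∃ i j, x = Sum.inl i ∧ y = Sum.inr j ∧ H j i ≠ 0)).Connected

/-- Graph-cover pseudocodeword for the `M`-cover specified by permutations `σ`. -/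
def IsGCPseudocodeword {R : Type} [Ring R] [DecidableEq R] {n m : ℕ}
    (H : Fin m → Fin n → R) (M : ℕ) (σ : Fin m → Fin n → Equiv.Perm (Fin M))
    (p : Fin n → Fin M → R) : Prop :=
  ∀ (j : Fin m) (ℓ : Fin M),
    ∑ i ∈ univ.filter (fun i => H j i ≠ 0), H j i * p i (σ j i ℓ) = 0
/-- for a nonzero LP pseudocodeword `(h, z)` (Tanner graph connected)
with `M = ∑_{α∈R} h_1(α)`, one has `M > 0` and `(h/M, z/M)` is a point of `Q`. -/
theorem stmt12 {R : Type} [Ring R] [Fintype R] [DecidableEq R] {n m : ℕ}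
    (hn : 0 < n) (hm : 0 < m)
    (H : Fin m → Fin n → R) (hconn : TannerConnected H)
    (h : Fin n → R → ℤ) (z : Fin m → (R → Finset (Fin n)) → ℤ)
    (hpc : IsLPPseudocodeword H h z)
    (hne : ∃ (i : Fin n) (α : R), h i α ≠ 0)
    (M : ℤ) (hM : M = ∑ α : R, h ⟨0, hn⟩ α) :
    0 < M ∧
    MemQ H (fun i α => (h i α : ℝ) / (M : ℝ)) (fun j S => (z j S : ℝ) / (M : ℝ)) := by
  classical
  obtain ⟨hnn, hzn, heq⟩ := hpc
  -- Key lemma: the total mass at each edge of the Tanner graph matches.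
  have lemA : ∀ (j : Fin m) (i : Fin n), H j i ≠ 0 →
      ∑ S ∈ Ej H j, z j S = ∑ α : R, h i α := by
    intro j i hij
    have key : ∀ S ∈ Ej H j, ∑ α : R, (if i ∈ S α then z j S else 0) = z j S := by
      intro S hS
      obtain ⟨c, -, rfl⟩ := Finset.mem_image.mp hS
      simp [Xj, hij]
    calc ∑ S ∈ Ej H j, z j S
        = ∑ S ∈ Ej H j, ∑ α : R, (if i ∈ S α then z j S else 0) :=
          (Finset.sum_congr rfl key).symm
      _ = ∑ α : R, ∑ S ∈ Ej H j, (if i ∈ S α then z j S else 0) := Finset.sum_comm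
      _ = ∑ α : R, ∑ S ∈ (Ej H j).filter (fun S => i ∈ S α), z j S := by
          simp [Finset.sum_filter]
      _ = ∑ α : R, h i α := by
          refine Finset.sum_congr rfl fun α _ => ?_
          by_cases hα : α = 0
          · subst hα
            have hfe : (Ej H j).filter (fun S => i ∈ S 0)
                = (Ej H j).filter (fun S => ∀ β : R, β ≠ 0 → i ∉ S β) := by
              refine Finset.filter_congr fun S hS => ?_
              obtain ⟨c, -, rfl⟩ := Finset.mem_image.mp hS
              simp only [Xj, Finset.mem_filter, Finset.mem_univ, true_and, hij,
                ne_eq, not_false_eq_true, not_and]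
              constructor
              · intro h0 β hβ hc
                exact hβ (hc ▸ h0)
              · intro hall
                by_contra hci
                exact hall (c i) (fun h0 => hci (h0 ▸ rfl)) rfl
            rw [hfe, ← (heq j i hij).2]
          · rw [← (heq j i hij).1 α hα]
  -- Transfer along the connected Tanner graph.
  set G := SimpleGraph.fromRel (fun x y : Fin n ⊕ Fin m =>
      ∃ i j, x = Sum.inl i ∧ y = Sum.inr j ∧ H j i ≠ 0) with hG
  have hconn' : G.Connected := hconn
  set val : Fin n ⊕ Fin m → ℤ :=
    Sum.elim (fun i => ∑ α : R, h i α) (fun j => ∑ S ∈ Ej H j, z j S) with hval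
  have edge : ∀ ⦃x y : Fin n ⊕ Fin m⦄, G.Adj x y → val x = val y := by
    intro x y hxy
    rw [hG, SimpleGraph.fromRel_adj] at hxy
    rcases hxy.2 with ⟨i, j, rfl, rfl, hij⟩ | ⟨i, j, rfl, rfl, hij⟩
    · exact (lemA j i hij).symm
    · exact lemA j i hij
  have reach : ∀ x y : Fin n ⊕ Fin m, G.Reachable x y → val x = val y := by
    intro x y hr
    obtain ⟨w⟩ := hr
    induction w with
    | nil => rfl
    | cons ha _ ih => exact (edge ha).trans ih
  have hvalM : ∀ x, val x = M := by
    intro x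
    rw [hM]
    exact reach x (Sum.inl ⟨0, hn⟩) (hconn'.preconnected x _)
  have rowconst : ∀ j : Fin m, ∑ S ∈ Ej H j, z j S = M := fun j => hvalM (Sum.inr j)
  have colconst : ∀ i : Fin n, ∑ α : R, h i α = M := fun i => hvalM (Sum.inl i)
  obtain ⟨i₀, α₀, hiα⟩ := hne
  have hMpos : 0 < M := by
    rw [← colconst i₀]
    exact Finset.sum_pos' (fun β _ => hnn i₀ β)
      ⟨α₀, Finset.mem_univ α₀, lt_of_le_of_ne (hnn i₀ α₀) (Ne.symm hiα)⟩
  have hMR : (0 : ℝ) < (M : ℝ) := by exact_mod_cast hMpos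
  refine ⟨hMpos, ⟨?_, ?_, ?_⟩⟩
  · intro j S hS
    constructor
    · exact div_nonneg (by exact_mod_cast hzn j S hS) hMR.le
    · rw [div_le_one hMR]
      have : z j S ≤ M := (Finset.single_le_sum (fun T hT => hzn j T hT) hS).trans
        (le_of_eq (rowconst j))
      exact_mod_cast this
  · intro j
    rw [← Finset.sum_div, div_eq_one_iff_eq (ne_of_gt hMR)]
    exact_mod_cast rowconst j
  · intro j i hij α hα
    rw [← Finset.sum_div]
    exact congrArg (· / (M : ℝ)) (by exact_mod_cast (heq j i hij).1 α hα)
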